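/- arXiv:2302.00273 — 2 statements merged into one kernel-verified Lean document; each statement's English description precedes it below -/
import Mathlib

section
/- The variable gadget V(x) = {V₁, V₂, V₃, V₄, V₅} with V₁ = V₅ = {1,2,3}, V₂ = V₃ = {1}, V₄ = {3}, and partial order V₁ ≺ V_b for b > 1, V_a ≺ V₅ for a < 5, V₂ ≺ V₃, admits a packing of height 4, and admits no packing of height 3. -/
/-- `SepGates π X X'` means `max π(X) + 1 < min π(X')`:
every position of `π(X)` is more than one below every position of `π(X')`. -/
def SepGates {n : ℕ} (π : Equiv.Perm (Fin n)) (X X' : Finset (Fin n)) : Prop :=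
  ∀ x ∈ X, ∀ y ∈ X', (π x : ℕ) + 1 < (π y : ℕ)

/-- A packing `(π, μ)` of an (indexed) family of gates `G` with strict order `lt`
(`lt i j` meaning gate `i` precedes gate `j`) and height `h`. Levels are `1,…,h`. -/
structure Packing {n : ℕ} (I : Type) (G : I → Finset (Fin n))
    (lt : I → I → Prop) (h : ℕ) where
  π : Equiv.Perm (Fin n)
  μ : I → ℕ
  μ_mem : ∀ i, μ i ∈ Finset.Icc 1 h
  horiz : ∀ i j, i ≠ j → μ i = μ j → SepGates π (G i) (G j) ∨ SepGates π (G j) (G i)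
  vert : ∀ i j, (G i ∩ G j).Nonempty → lt j i → μ j < μ i

/-- The variable gadget: `V₁ = V₅ = {1,2,3}`, `V₂ = V₃ = {1}`, `V₄ = {3}` (0-indexed here). -/
def Vg : Fin 5 → Finset (Fin 3) := ![{0, 1, 2}, {0}, {0}, {2}, {0, 1, 2}]

/-- The strict order of the variable gadget:
`V₁ ≺ V_b` for `b > 1`, `V_a ≺ V₅` for `a < 5`, and `V₂ ≺ V₃`. -/
def Vlt : Fin 5 → Fin 5 → Prop := fun i j =>
  (i = 0 ∧ j ≠ 0) ∨ (j = 4 ∧ i ≠ 4) ∨ (i = 1 ∧ j = 2)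


theorem stmt_4 :
    Nonempty (Packing (Fin 5) Vg Vlt 4) ∧ ¬ Nonempty (Packing (Fin 5) Vg Vlt 3) := by
  constructor
  · exact ⟨{ π := 1
             μ := ![1, 2, 3, 2, 4]
             μ_mem := by decide
             horiz := by unfold SepGates; decide
             vert := by unfold Vlt; decide }⟩
  · rintro ⟨p⟩
    have h01 : p.μ 0 < p.μ 1 := p.vert 1 0 ⟨0, by decide⟩ (by simp [Vlt])
    have h12 : p.μ 1 < p.μ 2 := p.vert 2 1 ⟨0, by decide⟩ (by simp [Vlt])
    have h24 : p.μ 2 < p.μ 4 := p.vert 4 2 ⟨0, by decide⟩ (by simp [Vlt])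
    have hm0 := p.μ_mem 0
    have hm4 := p.μ_mem 4
    simp [Finset.mem_Icc] at hm0 hm4
    omega
end

section
/- In any packing of the variable gadget with height 4, the levels of V₁, V₂, V₃, V₅ are forced: μ(V₁) = 1, μ(V₂) = 2, μ(V₃) = 3, μ(V₅) = 4, and μ(V₄) ∈ {2, 3}; moreover both choices μ(V₄) = 2 and μ(V₄) = 3 are realized by some packing of height 4. -/
def mkPack (m3 : ℕ) (hm : m3 = 2 ∨ m3 = 3) : Packing (Fin 5) Vg Vlt 4 where
  π := Equiv.refl _
  μ := ![1, 2, 3, m3, 4]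
  μ_mem := by intro i; fin_cases i <;> simp <;> omega
  horiz := by
    rcases hm with rfl | rfl <;>
    · intro i j hne hμ
      fin_cases i <;> fin_cases j <;>
        simp_all [SepGates, Vg] <;>
        first
          | omega
          | decide
          | (intro x hx y hy; fin_cases hx <;> fin_cases hy <;> simp <;> omega)
  vert := by
    intro i j hint hlt
    fin_cases i <;> fin_cases j <;>
      simp_all [Vlt, Vg] <;> omega

theorem stmt_5 :
    (∀ P : Packing (Fin 5) Vg Vlt 4,
      P.μ 0 = 1 ∧ P.μ 1 = 2 ∧ P.μ 2 = 3 ∧ P.μ 4 = 4 ∧ (P.μ 3 = 2 ∨ P.μ 3 = 3)) ∧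
    (∃ P : Packing (Fin 5) Vg Vlt 4, P.μ 3 = 2) ∧
    (∃ P : Packing (Fin 5) Vg Vlt 4, P.μ 3 = 3) := by
  refine ⟨?_, ⟨mkPack 2 (Or.inl rfl), rfl⟩, ⟨mkPack 3 (Or.inr rfl), rfl⟩⟩
  intro P
  have ne01 : (Vg 0 ∩ Vg 1).Nonempty := by decide
  have ne12 : (Vg 1 ∩ Vg 2).Nonempty := by decide
  have ne24 : (Vg 2 ∩ Vg 4).Nonempty := by decide
  have ne03 : (Vg 0 ∩ Vg 3).Nonempty := by decide
  have ne34 : (Vg 3 ∩ Vg 4).Nonempty := by decide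
  have h01 := P.vert 1 0 (by rwa [Finset.inter_comm]) (Or.inl ⟨rfl, by decide⟩)
  have h12 := P.vert 2 1 (by rwa [Finset.inter_comm]) (Or.inr (Or.inr ⟨rfl, rfl⟩))
  have h24 := P.vert 4 2 (by rwa [Finset.inter_comm]) (Or.inr (Or.inl ⟨rfl, by decide⟩))
  have h03 := P.vert 3 0 (by rwa [Finset.inter_comm]) (Or.inl ⟨rfl, by decide⟩)
  have h34 := P.vert 4 3 (by rwa [Finset.inter_comm]) (Or.inr (Or.inl ⟨rfl, by decide⟩))
  have m0 := P.μ_mem 0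
  have m4 := P.μ_mem 4
  have m3 := P.μ_mem 3
  simp [Finset.mem_Icc] at m0 m4 m3
  omega
end
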